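/- Let Ω ∈ (0,1) be a quadratic irrational with purely periodic continued fraction, associated matrices T, U, eigenvalue λ > 1, and write T = [[a,b],[c,d]]. For any primitive integer q, the resonant sequence s(q,n) = Uⁿk⁰(q) satisfies |s(q,n)|₁ = K_q·λⁿ + O(λ^{−n}) as n → ∞, i.e. there exists C > 0 such that | |s(q,n)|₁ − K_q λⁿ | ≤ C λ^{−n} for all n ≥ 0, where K_q = |z_q|(1+Ω)/|c+bΩ²| and z_q = cq + bpΩ with p = p⁰(q). -/

import Mathlib

open Real Filter Matrix

noncomputable section

/-- Orbit of the Gauss map `g(x) = {1/x}` starting at `Ω`: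
`x₀ = Ω`, `x_{j+1} = g(x_j)`. -/
def gaussOrbit (Ω : ℝ) : ℕ → ℝ
  | 0 => Ω
  | j + 1 => Int.fract (1 / gaussOrbit Ω j)

/-- `cfA Ω j` is the partial quotient `a_{j+1}` of the continued fraction of `Ω`. -/
def cfA (Ω : ℝ) (j : ℕ) : ℤ := ⌊1 / gaussOrbit Ω j⌋

/-- The matrix `[[a, 1], [1, 0]]`. -/
def Acf (a : ℤ) : Matrix (Fin 2) (Fin 2) ℤ := !![a, 1; 1, 0]

/-- The product `A₁ ⋯ A_m` with `A_i = [[a_i, 1], [1, 0]]`. -/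
def cfMatProd (Ω : ℝ) (m : ℕ) : Matrix (Fin 2) (Fin 2) ℤ :=
  ((List.range m).map fun i => Acf (cfA Ω i)).prod

/-- `cfQ Ω (j+1) = q_j`:  `q₋₁ = 0`, `q₀ = 1`, `q_j = a_j q_{j-1} + q_{j-2}`. -/
def cfQ (Ω : ℝ) : ℕ → ℤ
  | 0 => 0
  | 1 => 1
  | j + 2 => cfA Ω j * cfQ Ω (j + 1) + cfQ Ω j

/-- `cfP Ω (j+1) = p_j`:  `p₋₁ = 1`, `p₀ = 0`, `p_j = a_j p_{j-1} + p_{j-2}`. -/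
def cfP (Ω : ℝ) : ℕ → ℤ
  | 0 => 1
  | 1 => 0
  | j + 2 => cfA Ω j * cfP Ω (j + 1) + cfP Ω j

/-- The vector convergent `w(j) = (q_j, p_j)`. -/
def wconv (Ω : ℝ) (j : ℕ) : Fin 2 → ℤ := ![cfQ Ω (j + 1), cfP Ω (j + 1)]

/-- The resonant convergent `v(j) = (−p_j, q_j)`. -/
def vconv (Ω : ℝ) (j : ℕ) : Fin 2 → ℤ := ![-cfP Ω (j + 1), cfQ Ω (j + 1)]

/-- A quadratic irrational number. -/
def IsQuadraticIrrational (Ω : ℝ) : Prop :=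
  Irrational Ω ∧ ∃ A B C : ℤ, A ≠ 0 ∧ (A : ℝ) * Ω ^ 2 + (B : ℝ) * Ω + (C : ℝ) = 0

end
noncomputable section

/-- `⟨k, ω⟩ = k₁ + k₂ Ω` for `ω = (1, Ω)`. -/
def pairω (Ω : ℝ) (k : Fin 2 → ℤ) : ℝ := (k 0 : ℝ) + (k 1 : ℝ) * Ω

/-- `|k|₁ = |k₁| + |k₂|`. -/
def norm1 (k : Fin 2 → ℤ) : ℤ := |k 0| + |k 1|

/-- `p⁰(q)`: the integer nearest to `qΩ`. -/
def p0 (Ω : ℝ) (q : ℤ) : ℤ := round ((q : ℝ) * Ω)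

/-- `k⁰(q) = (−p⁰(q), q)`. -/
def kzero (Ω : ℝ) (q : ℤ) : Fin 2 → ℤ := ![-p0 Ω q, q]

/-- The set `A` of quasi-resonances: vectors `k⁰(q)`, `q ≥ 1`, with `|⟨k,ω⟩| < 1/2`. -/
def inA (Ω : ℝ) (k : Fin 2 → ℤ) : Prop :=
  ∃ q : ℤ, 1 ≤ q ∧ k = kzero Ω q ∧ |pairω Ω k| < 1 / 2

/-- A quasi-resonance `k` is primitive if `U⁻¹k` is not a quasi-resonance. -/
def PrimitiveVec (Ω : ℝ) (U : Matrix (Fin 2) (Fin 2) ℤ) (k : Fin 2 → ℤ) : Prop :=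
  inA Ω k ∧ ¬inA Ω (U⁻¹.mulVec k)

/-- A primitive integer `q ≥ 1`. -/
def PrimitiveInt (Ω : ℝ) (U : Matrix (Fin 2) (Fin 2) ℤ) (q : ℤ) : Prop :=
  1 ≤ q ∧ PrimitiveVec Ω U (kzero Ω q)

/-- The resonant sequence `s(q, n) = Uⁿ k⁰(q)`. -/
def sres (Ω : ℝ) (U : Matrix (Fin 2) (Fin 2) ℤ) (q : ℤ) (n : ℕ) : Fin 2 → ℤ :=
  (U ^ n).mulVec (kzero Ω q)

/-- `U = σ (T⁻¹)ᵀ` with `σ = det T = (−1)^m` and `T = A₁⋯A_m`. -/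
def Umat (Ω : ℝ) (m : ℕ) : Matrix (Fin 2) (Fin 2) ℤ :=
  ((-1 : ℤ) ^ m) • ((cfMatProd Ω m)⁻¹)ᵀ

/-- The numerator `γ_k = |⟨k,ω⟩| · |k|₁`. -/
def gammaK (Ω : ℝ) (k : Fin 2 → ℤ) : ℝ := |pairω Ω k| * (norm1 k : ℝ)

/-- `K_q = |z_q|(1+Ω)/|c+bΩ²|`, where `z_q = cq + bpΩ`, `p = p⁰(q)`,
and `b, c` are the off-diagonal entries of `T = A₁⋯A_m = [[a,b],[c,d]]`. -/
def KqD (Ω : ℝ) (m : ℕ) (q : ℤ) : ℝ :=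
  |(cfMatProd Ω m 1 0 : ℝ) * (q : ℝ) + (cfMatProd Ω m 0 1 : ℝ) * (p0 Ω q : ℝ) * Ω| * (1 + Ω) /
    |(cfMatProd Ω m 1 0 : ℝ) + (cfMatProd Ω m 0 1 : ℝ) * Ω ^ 2|

/-- The limit numerator `γ*_q = |r_q| K_q` with `r_q = qΩ − p⁰(q)`. -/
def gammaStarQ (Ω : ℝ) (m : ℕ) (q : ℤ) : ℝ :=
  |(q : ℝ) * Ω - (p0 Ω q : ℝ)| * KqD Ω m q

end


section auxSplit

lemma gaussOrbit_mem (Ω : ℝ) (hirr : Irrational Ω) (h0 : 0 < Ω) (h1 : Ω < 1) :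
    ∀ j, Irrational (gaussOrbit Ω j) ∧ 0 < gaussOrbit Ω j ∧ gaussOrbit Ω j < 1 := by
  intro j
  induction j with
  | zero => exact ⟨hirr, h0, h1⟩
  | succ j ih =>
    obtain ⟨hi, hp, hl⟩ := ih
    have hinv : Irrational (1 / gaussOrbit Ω j) := by
      rw [one_div]; exact hi.inv
    have hfr : Irrational (Int.fract (1 / gaussOrbit Ω j)) := by
      rw [Int.fract]; exact hinv.sub_intCast _
    refine ⟨by simpa [gaussOrbit] using hfr, ?_, ?_⟩
    · have h0' : Int.fract (1 / gaussOrbit Ω j) ≠ 0 := hfr.ne_zero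
      have := Int.fract_nonneg (1 / gaussOrbit Ω j)
      simp only [gaussOrbit]
      exact lt_of_le_of_ne this (Ne.symm h0')
    · simpa [gaussOrbit] using Int.fract_lt_one (1 / gaussOrbit Ω j)

lemma cfA_ge_one (Ω : ℝ) (hirr : Irrational Ω) (h0 : 0 < Ω) (h1 : Ω < 1) (j : ℕ) :
    1 ≤ cfA Ω j := by
  obtain ⟨hi, hp, hl⟩ := gaussOrbit_mem Ω hirr h0 h1 j
  rw [cfA]
  refine Int.le_floor.2 ?_
  push_cast
  rw [le_div_iff₀ hp]; linarith

lemma cfMatProd_succ (Ω : ℝ) (m : ℕ) :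
    cfMatProd Ω (m+1) = cfMatProd Ω m * Acf (cfA Ω m) := by
  rw [cfMatProd, cfMatProd, List.range_succ, List.map_append, List.prod_append]
  simp

lemma cfMatProd_entries (Ω : ℝ) (hA : ∀ j, 1 ≤ cfA Ω j) (m : ℕ) :
    1 ≤ cfMatProd Ω m 0 0 ∧ 0 ≤ cfMatProd Ω m 0 1 ∧ 0 ≤ cfMatProd Ω m 1 0 ∧
      0 ≤ cfMatProd Ω m 1 1 ∧ 1 ≤ cfMatProd Ω m 1 0 + cfMatProd Ω m 1 1 := by
  induction m with
  | zero => simp [cfMatProd, Matrix.one_apply]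
  | succ m ih =>
    obtain ⟨h00, h01, h10, h11, hs⟩ := ih
    have ha := hA m
    have e00 : cfMatProd Ω (m+1) 0 0
        = cfMatProd Ω m 0 0 * cfA Ω m + cfMatProd Ω m 0 1 := by
      rw [cfMatProd_succ]
      simp [Matrix.mul_apply, Fin.sum_univ_two, Acf]
    have e01 : cfMatProd Ω (m+1) 0 1 = cfMatProd Ω m 0 0 := by
      rw [cfMatProd_succ]
      simp [Matrix.mul_apply, Fin.sum_univ_two, Acf]
    have e10 : cfMatProd Ω (m+1) 1 0
        = cfMatProd Ω m 1 0 * cfA Ω m + cfMatProd Ω m 1 1 := by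
      rw [cfMatProd_succ]
      simp [Matrix.mul_apply, Fin.sum_univ_two, Acf]
    have e11 : cfMatProd Ω (m+1) 1 1 = cfMatProd Ω m 1 0 := by
      rw [cfMatProd_succ]
      simp [Matrix.mul_apply, Fin.sum_univ_two, Acf]
    rw [e00, e01, e10, e11]
    refine ⟨?_, ?_, ?_, ?_, ?_⟩ <;> nlinarith

lemma cfMatProd_c_ge_one (Ω : ℝ) (hA : ∀ j, 1 ≤ cfA Ω j) (m : ℕ) (hm : 1 ≤ m) :
    1 ≤ cfMatProd Ω m 1 0 := by
  obtain ⟨k, rfl⟩ : ∃ k, m = k + 1 := ⟨m - 1, by omega⟩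
  obtain ⟨h00, h01, h10, h11, hs⟩ := cfMatProd_entries Ω hA k
  have ha := hA k
  have e10 : cfMatProd Ω (k+1) 1 0
      = cfMatProd Ω k 1 0 * cfA Ω k + cfMatProd Ω k 1 1 := by
    rw [cfMatProd_succ]
    simp [Matrix.mul_apply, Fin.sum_univ_two, Acf]
  rw [e10]; nlinarith

lemma cfMatProd_det (Ω : ℝ) (m : ℕ) : (cfMatProd Ω m).det = (-1) ^ m := by
  induction m with
  | zero => simp [cfMatProd]
  | succ m ih =>
    rw [cfMatProd_succ, Matrix.det_mul, ih]
    have h : (Acf (cfA Ω m)).det = -1 := by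
      simp [Acf, Matrix.det_fin_two_of]
    rw [h]; ring

lemma Umat_eq (Ω : ℝ) (m : ℕ) :
    Umat Ω m = !![cfMatProd Ω m 1 1, -(cfMatProd Ω m 1 0);
                  -(cfMatProd Ω m 0 1), cfMatProd Ω m 0 0] := by
  have hpow : ((-1 : ℤ) ^ m) * ((-1 : ℤ) ^ m) = 1 := by
    rw [← pow_add, ← two_mul, pow_mul]; norm_num
  have hinv : (cfMatProd Ω m)⁻¹ = ((-1 : ℤ) ^ m) • (cfMatProd Ω m).adjugate := by
    apply Matrix.inv_eq_right_inv
    rw [Matrix.mul_smul, Matrix.mul_adjugate, cfMatProd_det, smul_smul, hpow, one_smul]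
  rw [Umat, hinv, Matrix.transpose_smul, smul_smul, hpow, one_smul,
      Matrix.adjugate_fin_two]
  ext i j
  fin_cases i <;> fin_cases j <;>
    simp [Matrix.transpose_apply]

end auxSplit

set_option maxHeartbeats 2000000 in
/-- Proposition 3(a): for a primitive `q`, the resonant sequence `s(q,n) = Uⁿk⁰(q)`
satisfies `|s(q,n)|₁ = K_q λⁿ + O(λ^{−n})`. -/
theorem splitting_quadratic_stmt7
    (Ω : ℝ) (m : ℕ) (hm : 1 ≤ m) (h0 : 0 < Ω) (h1 : Ω < 1)
    (hquad : IsQuadraticIrrational Ω)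
    (hper : gaussOrbit Ω m = Ω)
    (lam : ℝ) (hlam : 1 < lam)
    (heig : ((cfMatProd Ω m).map fun z : ℤ => (z : ℝ)).mulVec ![1, Ω] = lam • ![1, Ω])
    (q : ℤ) (hq : PrimitiveInt Ω (Umat Ω m) q) :
    ∃ C : ℝ, 0 < C ∧ ∀ n : ℕ,
      |((norm1 (sres Ω (Umat Ω m) q n) : ℝ)) - KqD Ω m q * lam ^ n| ≤ C * (lam ^ n)⁻¹ := by
  obtain ⟨hirr, -⟩ := hquad
  have hA := cfA_ge_one Ω hirr h0 h1
  obtain ⟨h00, h01, h10, h11, hsumZ⟩ := cfMatProd_entries Ω hA m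
  have hc1 := cfMatProd_c_ge_one Ω hA m hm
  set aR : ℝ := ((cfMatProd Ω m 0 0 : ℤ) : ℝ) with haR
  set bR : ℝ := ((cfMatProd Ω m 0 1 : ℤ) : ℝ) with hbR
  set cR : ℝ := ((cfMatProd Ω m 1 0 : ℤ) : ℝ) with hcR
  set dR : ℝ := ((cfMatProd Ω m 1 1 : ℤ) : ℝ) with hdR
  have haR1 : (1:ℝ) ≤ aR := by rw [haR]; exact_mod_cast h00
  have hbR0 : (0:ℝ) ≤ bR := by rw [hbR]; exact_mod_cast h01
  have hcR1 : (1:ℝ) ≤ cR := by rw [hcR]; exact_mod_cast hc1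
  have hdR0 : (0:ℝ) ≤ dR := by rw [hdR]; exact_mod_cast h11
  have hlam0 : (0:ℝ) < lam := lt_trans one_pos hlam
  -- eigen equations
  have e1 : aR + bR * Ω = lam := by
    have h := congrFun heig 0
    simp only [Matrix.mulVec, dotProduct, Fin.sum_univ_two, Matrix.map_apply,
      Matrix.cons_val_zero, Matrix.cons_val_one, Matrix.head_cons, Pi.smul_apply,
      smul_eq_mul, mul_one] at h
    rw [haR, hbR]; exact h
  have e2 : cR + dR * Ω = lam * Ω := by
    have h := congrFun heig 1
    simp only [Matrix.mulVec, dotProduct, Fin.sum_univ_two, Matrix.map_apply,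
      Matrix.cons_val_zero, Matrix.cons_val_one, Matrix.head_cons, Pi.smul_apply,
      smul_eq_mul, mul_one] at h
    rw [hcR, hdR]; exact h
  have hD : (0:ℝ) < cR + bR * Ω ^ 2 := by nlinarith [sq_nonneg Ω]
  have hDne : cR + bR * Ω ^ 2 ≠ 0 := ne_of_gt hD
  set p : ℤ := p0 Ω q with hp
  set α : ℝ := (cR * (q:ℝ) + bR * (p:ℝ) * Ω) / (cR + bR * Ω ^ 2) with hα
  set β : ℝ := ((q:ℝ) * Ω - (p:ℝ)) / (cR + bR * Ω ^ 2) with hβ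
  set μ : ℝ := aR + dR - lam with hμ
  have hquadΩ : bR * Ω ^ 2 + (aR - dR) * Ω - cR = 0 := by
    linear_combination Ω * e1 - e2
  have hdetR : aR * dR - bR * cR = (-1 : ℝ) ^ m := by
    have hdz := cfMatProd_det Ω m
    rw [Matrix.det_fin_two] at hdz
    have : ((cfMatProd Ω m 0 0 * cfMatProd Ω m 1 1
        - cfMatProd Ω m 0 1 * cfMatProd Ω m 1 0 : ℤ) : ℝ) = (((-1 : ℤ) ^ m : ℤ) : ℝ) := by
      exact_mod_cast congrArg (fun z : ℤ => (z : ℝ)) hdz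
    push_cast at this
    rw [haR, hbR, hcR, hdR]; push_cast; linarith
  have hmuσ : lam * μ = (-1 : ℝ) ^ m := by
    rw [hμ, show lam = aR + bR * Ω from e1.symm]
    linear_combination hdetR - bR * hquadΩ
  have habsμ : |μ| = lam⁻¹ := by
    have h1' : |lam * μ| = 1 := by
      rw [hmuσ, abs_pow, abs_neg, abs_one, one_pow]
    rw [abs_mul, abs_of_pos hlam0] at h1'
    field_simp
    linarith [h1', mul_comm lam |μ|]
  have hk0 : ((kzero Ω q 0 : ℤ) : ℝ) = -(p:ℝ) := by
    simp [kzero, hp]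
  have hk1 : ((kzero Ω q 1 : ℤ) : ℝ) = (q:ℝ) := by
    simp [kzero]
  have hU := Umat_eq Ω m
  -- closed form for the iterates
  have key : ∀ n : ℕ,
      (((Umat Ω m ^ n).mulVec (kzero Ω q) 0 : ℤ) : ℝ)
          = α * lam ^ n * (-Ω) + β * μ ^ n * cR ∧
      (((Umat Ω m ^ n).mulVec (kzero Ω q) 1 : ℤ) : ℝ)
          = α * lam ^ n + β * μ ^ n * (bR * Ω) := by
    intro n
    induction n with
    | zero =>
      constructor
      · rw [pow_zero, Matrix.one_mulVec, hk0, hα, hβ]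
        rw [pow_zero]
        field_simp
        ring
      · rw [pow_zero, Matrix.one_mulVec, hk1, hα, hβ]
        rw [pow_zero]
        field_simp
        ring
    | succ n ih =>
      obtain ⟨ih0, ih1⟩ := ih
      have hstep : (Umat Ω m ^ (n+1)).mulVec (kzero Ω q)
          = (Umat Ω m).mulVec ((Umat Ω m ^ n).mulVec (kzero Ω q)) := by
        rw [Matrix.mulVec_mulVec, ← pow_succ']
      have hcomp0 : (Umat Ω m ^ (n+1)).mulVec (kzero Ω q) 0
          = cfMatProd Ω m 1 1 * (Umat Ω m ^ n).mulVec (kzero Ω q) 0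
            - cfMatProd Ω m 1 0 * (Umat Ω m ^ n).mulVec (kzero Ω q) 1 := by
        rw [hstep, hU]
        simp [Matrix.mulVec, dotProduct, Fin.sum_univ_two]
        ring
      have hcomp1 : (Umat Ω m ^ (n+1)).mulVec (kzero Ω q) 1
          = -(cfMatProd Ω m 0 1) * (Umat Ω m ^ n).mulVec (kzero Ω q) 0
            + cfMatProd Ω m 0 0 * (Umat Ω m ^ n).mulVec (kzero Ω q) 1 := by
        rw [hstep, hU]
        simp [Matrix.mulVec, dotProduct, Fin.sum_univ_two]
      constructor
      · rw [hcomp0]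
        push_cast
        rw [← hdR, ← hcR, ih0, ih1]
        rw [hμ]
        linear_combination (-(α * lam ^ n)) * e2
          + (-(β * (aR + dR - lam) ^ n * cR)) * e1
      · rw [hcomp1]
        push_cast
        rw [← hbR, ← haR, ih0, ih1]
        rw [hμ]
        linear_combination (α * lam ^ n) * e1
          + (-(β * (aR + dR - lam) ^ n * bR)) * e2
  have hKq : KqD Ω m q = |α| * (1 + Ω) := by
    rw [KqD, ← hbR, ← hcR, ← hp, hα, abs_div]
    rw [abs_of_pos hD]
    ring
  refine ⟨|β| * (cR + bR * Ω) + 1, ?_, ?_⟩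
  · have : (0:ℝ) ≤ |β| * (cR + bR * Ω) :=
      mul_nonneg (abs_nonneg _) (by nlinarith)
    linarith
  · intro n
    obtain ⟨hx, hy⟩ := key n
    have hlamn : (0:ℝ) < lam ^ n := pow_pos hlam0 n
    have hlamninv : (0:ℝ) < (lam ^ n)⁻¹ := inv_pos.2 hlamn
    have hnorm : ((norm1 (sres Ω (Umat Ω m) q n) : ℤ) : ℝ)
        = |(((Umat Ω m ^ n).mulVec (kzero Ω q) 0 : ℤ) : ℝ)|
          + |(((Umat Ω m ^ n).mulVec (kzero Ω q) 1 : ℤ) : ℝ)| := by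
      rw [norm1, sres]
      push_cast [Int.cast_abs]
      ring
    have hXabs : |α * lam ^ n * (-Ω)| + |α * lam ^ n| = |α| * (1 + Ω) * lam ^ n := by
      rw [abs_mul, abs_neg, abs_of_pos h0, abs_mul, abs_of_pos hlamn]
      ring
    have hdx : |(((Umat Ω m ^ n).mulVec (kzero Ω q) 0 : ℤ) : ℝ) - α * lam ^ n * (-Ω)|
        = |β| * cR * (lam ^ n)⁻¹ := by
      have h' : (((Umat Ω m ^ n).mulVec (kzero Ω q) 0 : ℤ) : ℝ) - α * lam ^ n * (-Ω)
          = β * μ ^ n * cR := by rw [hx]; ring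
      rw [h', abs_mul, abs_mul, abs_pow, habsμ, inv_pow, abs_of_nonneg (by linarith : (0:ℝ) ≤ cR)]
      ring
    have hdy : |(((Umat Ω m ^ n).mulVec (kzero Ω q) 1 : ℤ) : ℝ) - α * lam ^ n|
        = |β| * (bR * Ω) * (lam ^ n)⁻¹ := by
      have h' : (((Umat Ω m ^ n).mulVec (kzero Ω q) 1 : ℤ) : ℝ) - α * lam ^ n
          = β * μ ^ n * (bR * Ω) := by rw [hy]; ring
      rw [h', abs_mul, abs_mul, abs_pow, habsμ, inv_pow,
        abs_of_nonneg (mul_nonneg hbR0 h0.le)]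
      ring
    have t1 := abs_abs_sub_abs_le_abs_sub
      (((Umat Ω m ^ n).mulVec (kzero Ω q) 0 : ℤ) : ℝ) (α * lam ^ n * (-Ω))
    have t2 := abs_abs_sub_abs_le_abs_sub
      (((Umat Ω m ^ n).mulVec (kzero Ω q) 1 : ℤ) : ℝ) (α * lam ^ n)
    rw [hnorm, hKq]
    have habs1 := abs_add_le
      (|(((Umat Ω m ^ n).mulVec (kzero Ω q) 0 : ℤ) : ℝ)| - |α * lam ^ n * (-Ω)|)
      (|(((Umat Ω m ^ n).mulVec (kzero Ω q) 1 : ℤ) : ℝ)| - |α * lam ^ n|)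
    have hrw : |(((Umat Ω m ^ n).mulVec (kzero Ω q) 0 : ℤ) : ℝ)|
          + |(((Umat Ω m ^ n).mulVec (kzero Ω q) 1 : ℤ) : ℝ)| - |α| * (1 + Ω) * lam ^ n
        = (|(((Umat Ω m ^ n).mulVec (kzero Ω q) 0 : ℤ) : ℝ)| - |α * lam ^ n * (-Ω)|)
          + (|(((Umat Ω m ^ n).mulVec (kzero Ω q) 1 : ℤ) : ℝ)| - |α * lam ^ n|) := by
      rw [← hXabs]; ring
    calc |(|(((Umat Ω m ^ n).mulVec (kzero Ω q) 0 : ℤ) : ℝ)|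
            + |(((Umat Ω m ^ n).mulVec (kzero Ω q) 1 : ℤ) : ℝ)|) - |α| * (1 + Ω) * lam ^ n|
        = |(|(((Umat Ω m ^ n).mulVec (kzero Ω q) 0 : ℤ) : ℝ)| - |α * lam ^ n * (-Ω)|)
          + (|(((Umat Ω m ^ n).mulVec (kzero Ω q) 1 : ℤ) : ℝ)| - |α * lam ^ n|)| := by
          rw [← hrw]
      _ ≤ |(|(((Umat Ω m ^ n).mulVec (kzero Ω q) 0 : ℤ) : ℝ)| - |α * lam ^ n * (-Ω)|)|
          + |(|(((Umat Ω m ^ n).mulVec (kzero Ω q) 1 : ℤ) : ℝ)| - |α * lam ^ n|)| := habs1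
      _ ≤ |(((Umat Ω m ^ n).mulVec (kzero Ω q) 0 : ℤ) : ℝ) - α * lam ^ n * (-Ω)|
          + |(((Umat Ω m ^ n).mulVec (kzero Ω q) 1 : ℤ) : ℝ) - α * lam ^ n| :=
          add_le_add t1 t2
      _ = |β| * (cR + bR * Ω) * (lam ^ n)⁻¹ := by rw [hdx, hdy]; ring
      _ ≤ (|β| * (cR + bR * Ω) + 1) * (lam ^ n)⁻¹ := by nlinarith
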